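/- Every countable sofic group is hyperlinear: it embeds as a group of unitaries into the tracial ultrapower R^ω of the hyperfinite II₁ factor R, equivalently (in a form avoiding von Neumann algebras) for every finite subset F and ε > 0 there exist n and unitary n×n permutation matrices u_g (g ∈ F) with |tr(u_g u_h u_{gh}*) − 1| < ε for g,h,gh ∈ F and |tr(u_g)| < ε for g ≠ 1, where tr is the normalized trace. -/

import Mathlib

/-- The number of fixed points of a permutation of a finite type. -/
def fixCount {X : Type*} [Fintype X] [DecidableEq X] (α : Equiv.Perm X) : ℕ :=
  (Finset.univ.filter fun x => α x = x).card

/-- A group `Γ` is sofic (Definition of Elek–Szabó). -/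
def IsSofic (Γ : Type*) [Group Γ] : Prop :=
  ∀ (F : Finset Γ) (ε : ℝ), 0 < ε → ε < 1 →
    ∃ (n : ℕ), 0 < n ∧ ∃ φ : Γ → Equiv.Perm (Fin n),
      φ 1 = 1 ∧
      (∀ e ∈ F, ∀ f ∈ F,
        (1 - ε) * n ≤ (fixCount (φ e * φ f * (φ (e * f))⁻¹) : ℝ)) ∧
      (∀ e ∈ F, e ≠ 1 → (fixCount (φ e) : ℝ) ≤ ε * n)

/-- The complex permutation matrix of `π ∈ S_n`. -/
def permMatrix {n : ℕ} (π : Equiv.Perm (Fin n)) : Matrix (Fin n) (Fin n) ℂ :=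
  fun i j => if π j = i then 1 else 0

lemma permMatrix_trace {n : ℕ} (π : Equiv.Perm (Fin n)) :
    (permMatrix π).trace = (fixCount π : ℂ) := by
  simp only [Matrix.trace, Matrix.diag, permMatrix, fixCount, Finset.card_filter]
  push_cast
  rfl

lemma permMatrix_mul {n : ℕ} (π σ : Equiv.Perm (Fin n)) :
    permMatrix π * permMatrix σ = permMatrix (π * σ) := by
  ext i j
  simp only [Matrix.mul_apply, permMatrix, Equiv.Perm.mul_apply]
  rw [Finset.sum_eq_single (σ j)]
  · simp
    congr
  · intro b _ hb
    simp [Ne.symm hb]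
  · simp

lemma permMatrix_conjTranspose {n : ℕ} (π : Equiv.Perm (Fin n)) :
    (permMatrix π).conjTranspose = permMatrix π⁻¹ := by
  ext i j
  simp only [Matrix.conjTranspose_apply, permMatrix]
  by_cases h : π i = j
  · subst h
    simp
  · have h2 : π⁻¹ j ≠ i := fun hh => h (by rw [← hh]; simp)
    simp [h, h2]
    exact h2

lemma fixCount_le {n : ℕ} (π : Equiv.Perm (Fin n)) : fixCount π ≤ n := by
  simpa [fixCount] using Finset.card_filter_le (Finset.univ : Finset (Fin n)) _

/-- Every countable sofic group is hyperlinear, in the matrix form: for every finite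
subset `F` and `ε > 0` there are `n` and unitary permutation matrices `u_g` (`g ∈ Γ`)
with `|tr(u_g u_h u_{gh}*) − 1| < ε` whenever `g, h, gh ∈ F` and `|tr(u_g)| < ε` for
`1 ≠ g ∈ F`, where `tr` is the normalized trace. -/
theorem countable_sofic_is_hyperlinear {Γ : Type*} [Group Γ] [Countable Γ]
    (hΓ : IsSofic Γ) (F : Finset Γ) (ε : ℝ) (hε : 0 < ε) :
    ∃ (n : ℕ), 0 < n ∧ ∃ u : Γ → Matrix (Fin n) (Fin n) ℂ,
      (∀ g : Γ, ∃ π : Equiv.Perm (Fin n), u g = permMatrix π) ∧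
      (∀ g ∈ F, ∀ h ∈ F, g * h ∈ F →
        ‖(u g * u h * (u (g * h)).conjTranspose).trace / (n : ℂ) - 1‖ < ε) ∧
      (∀ g ∈ F, g ≠ 1 → ‖(u g).trace / (n : ℂ)‖ < ε) := by
  set ε' : ℝ := min ε 1 / 2 with hε'def
  have hε'pos : 0 < ε' := by positivity
  have hε'lt1 : ε' < 1 := by
    have : min ε 1 ≤ 1 := min_le_right _ _
    linarith
  have hε'ltε : ε' < ε := by
    have : min ε 1 ≤ ε := min_le_left _ _
    linarith
  obtain ⟨n, hn, φ, hφ1, hmul, hfix⟩ := hΓ F ε' hε'pos hε'lt1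
  have hnR : (0 : ℝ) < n := by exact_mod_cast hn
  refine ⟨n, hn, fun g => permMatrix (φ g), fun g => ⟨φ g, rfl⟩, ?_, ?_⟩
  · intro g hg h hh _
    rw [permMatrix_conjTranspose, permMatrix_mul, permMatrix_mul, permMatrix_trace]
    have hlow := hmul g hg h hh
    have hup : (fixCount (φ g * φ h * (φ (g * h))⁻¹) : ℝ) ≤ n := by
      exact_mod_cast fixCount_le _
    set c : ℝ := (fixCount (φ g * φ h * (φ (g * h))⁻¹) : ℝ)
    have key : ((fixCount (φ g * φ h * (φ (g * h))⁻¹) : ℂ) / n - 1) = ((c / n - 1 : ℝ) : ℂ) := by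
      push_cast [c]
      ring
    rw [key, Complex.norm_real, Real.norm_eq_abs]
    rw [abs_lt]
    constructor
    · have : (1 - ε') * n ≤ c := hlow
      have h1 : 1 - ε' ≤ c / n := by
        rw [le_div_iff₀ hnR]; linarith
      linarith
    · have : c / n ≤ 1 := by rw [div_le_one hnR]; exact hup
      linarith
  · intro g hg hg1
    rw [permMatrix_trace]
    have h1 := hfix g hg hg1
    have h0 : (0 : ℝ) ≤ (fixCount (φ g) : ℝ) := by positivity
    set c : ℝ := (fixCount (φ g) : ℝ)
    have key : ((fixCount (φ g) : ℂ) / n) = ((c / n : ℝ) : ℂ) := by push_cast [c]; ring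
    rw [key, Complex.norm_real, Real.norm_eq_abs, abs_of_nonneg (by positivity)]
    have : c / n ≤ ε' := by rw [div_le_iff₀ hnR]; exact h1
    linarith
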